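/- Let B be a bipartite graph with parts U and V with |U| = m and |V| = n, and let d be the average degree of the vertices of V (so d = e(B)/n). If n·d² ≥ 4m² and d ≥ 2, then the number of 4-cycles in B is at least n²d⁴/(64m²). -/

import Mathlib

set_option maxHeartbeats 1000000

open Finset

private lemma fiber_fst {α β : Type} [DecidableEq α] [DecidableEq β]
    (A : Finset α) (B : Finset β) (P : α × β → Prop) [DecidablePred P] :
    ((A ×ˢ B).filter P).card = ∑ a ∈ A, (B.filter fun b => P (a, b)).card := by
  rw [card_eq_sum_card_fiberwise (f := Prod.fst) (t := A)
    (fun x hx => (mem_product.mp (mem_filter.mp hx).1).1)]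
  refine sum_congr rfl fun a ha => ?_
  have himg : (((A ×ˢ B).filter P).filter fun x => x.1 = a)
      = (B.filter fun b => P (a, b)).image (fun b => (a, b)) := by
    ext x
    simp only [mem_filter, mem_product, mem_image]
    constructor
    · rintro ⟨⟨⟨hxA, hxB⟩, hP⟩, hx1⟩
      refine ⟨x.2, ⟨hxB, ?_⟩, ?_⟩
      · rw [← hx1]; exact hP
      · rw [← hx1]
    · rintro ⟨b, ⟨hbB, hPb⟩, rfl⟩
      exact ⟨⟨⟨ha, hbB⟩, hPb⟩, rfl⟩
  rw [himg, card_image_of_injective _ (fun b1 b2 h => congrArg Prod.snd h)]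

private lemma fiber_snd {α β : Type} [DecidableEq α] [DecidableEq β]
    (A : Finset α) (B : Finset β) (P : α × β → Prop) [DecidablePred P] :
    ((A ×ˢ B).filter P).card = ∑ b ∈ B, (A.filter fun a => P (a, b)).card := by
  rw [card_eq_sum_card_fiberwise (f := Prod.snd) (t := B)
    (fun x hx => (mem_product.mp (mem_filter.mp hx).1).2)]
  refine sum_congr rfl fun b hb => ?_
  have himg : (((A ×ˢ B).filter P).filter fun x => x.2 = b)
      = (A.filter fun a => P (a, b)).image (fun a => (a, b)) := by
    ext x
    simp only [mem_filter, mem_product, mem_image]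
    constructor
    · rintro ⟨⟨⟨hxA, hxB⟩, hP⟩, hx2⟩
      refine ⟨x.1, ⟨hxA, ?_⟩, ?_⟩
      · rw [← hx2]; exact hP
      · rw [← hx2]
    · rintro ⟨b', ⟨hbB, hPb⟩, rfl⟩
      exact ⟨⟨⟨hbB, hb⟩, hPb⟩, rfl⟩
  rw [himg, card_image_of_injective _ (fun b1 b2 h => congrArg Prod.fst h)]

private lemma two_mul_card_pairs (s : Finset ℕ) :
    2 * ((s ×ˢ s).filter fun p => p.1 < p.2).card = s.card * (s.card - 1) := by
  have hlt : ((s ×ˢ s).filter fun p => p.1 < p.2) = s.offDiag.filter fun p => p.1 < p.2 := by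
    ext p
    simp only [mem_filter, mem_product, mem_offDiag]
    constructor
    · rintro ⟨⟨h1, h2⟩, h3⟩; exact ⟨⟨h1, h2, h3.ne⟩, h3⟩
    · rintro ⟨⟨h1, h2, _⟩, h3⟩; exact ⟨⟨h1, h2⟩, h3⟩
  have hswap : (s.offDiag.filter fun p => p.1 < p.2).card
      = (s.offDiag.filter fun p => ¬ p.1 < p.2).card := by
    refine card_bij' (fun x _ => x.swap) (fun x _ => x.swap) ?_ ?_ ?_ ?_
    · intro x hx
      simp only [mem_filter, mem_offDiag, Prod.fst_swap, Prod.snd_swap] at hx ⊢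
      exact ⟨⟨hx.1.2.1, hx.1.1, Ne.symm hx.1.2.2⟩, not_lt.mpr hx.2.le⟩
    · intro x hx
      simp only [mem_filter, mem_offDiag, Prod.fst_swap, Prod.snd_swap] at hx ⊢
      exact ⟨⟨hx.1.2.1, hx.1.1, Ne.symm hx.1.2.2⟩,
        lt_of_le_of_ne (not_lt.mp hx.2) (Ne.symm hx.1.2.2)⟩
    · intro x _; exact Prod.swap_swap x
    · intro x _; exact Prod.swap_swap x
  have hsum := card_filter_add_card_filter_not (s := s.offDiag)
    (p := fun p => p.1 < p.2)
  have hoff : s.offDiag.card = s.card * (s.card - 1) := by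
    rw [offDiag_card]
    cases h : s.card with
    | zero => simp
    | succ k => rw [Nat.mul_succ, Nat.succ_sub_one, Nat.add_sub_cancel]
  rw [hlt]
  omega

theorem stmt_1 (U V : Finset ℕ) (E : Finset (ℕ × ℕ)) (hE : E ⊆ U ×ˢ V)
    (m n : ℕ) (hm : U.card = m) (hn : V.card = n) (hnpos : 0 < n)
    (d : ℝ) (hd : d = (E.card : ℝ) / n)
    (h1 : (n : ℝ) * d ^ 2 ≥ 4 * (m : ℝ) ^ 2) (h2 : d ≥ 2) :
    ((n : ℝ) ^ 2 * d ^ 4 / (64 * (m : ℝ) ^ 2)) ≤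
      (((((U ×ˢ U).filter fun p => p.1 < p.2) ×ˢ
          ((V ×ˢ V).filter fun q => q.1 < q.2)).filter fun x =>
            (x.1.1, x.2.1) ∈ E ∧ (x.1.1, x.2.2) ∈ E ∧
            (x.1.2, x.2.1) ∈ E ∧ (x.1.2, x.2.2) ∈ E).card : ℝ) := by
  classical
  set PU : Finset (ℕ × ℕ) := (U ×ˢ U).filter fun p => p.1 < p.2 with hPU
  set PV : Finset (ℕ × ℕ) := (V ×ˢ V).filter fun q => q.1 < q.2 with hPV
  set deg : ℕ → ℕ := fun v => (U.filter fun u => (u, v) ∈ E).card with hdeg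
  set c : ℕ × ℕ → ℕ := fun p => (V.filter fun v => (p.1, v) ∈ E ∧ (p.2, v) ∈ E).card with hc
  set a : ℕ → ℕ := fun v => (PU.filter fun p => (p.1, v) ∈ E ∧ (p.2, v) ∈ E).card with ha
  set b : ℕ × ℕ → ℕ := fun p => (PV.filter fun q =>
      (p.1, q.1) ∈ E ∧ (p.1, q.2) ∈ E ∧ (p.2, q.1) ∈ E ∧ (p.2, q.2) ∈ E).card with hb
  -- the edge count as sum of degrees
  have hEdeg : E.card = ∑ v ∈ V, deg v := by
    have hEeq : (U ×ˢ V).filter (fun x => x ∈ E) = E := by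
      ext x
      simp only [mem_filter]
      exact ⟨fun h => h.2, fun h => ⟨hE h, h⟩⟩
    conv_lhs => rw [← hEeq]
    exact fiber_snd U V (fun x => x ∈ E)
  -- two expressions for the number of "cherries"
  have hcherry : ∑ v ∈ V, a v = ∑ p ∈ PU, c p := by
    have h1' := fiber_snd PU V (fun x => (x.1.1, x.2) ∈ E ∧ (x.1.2, x.2) ∈ E)
    have h2' := fiber_fst PU V (fun x => (x.1.1, x.2) ∈ E ∧ (x.1.2, x.2) ∈ E)
    rw [h1'] at h2'
    exact h2'
  -- 2 * a v = deg v * (deg v - 1)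
  have haa : ∀ v, 2 * a v = deg v * (deg v - 1) := by
    intro v
    have : PU.filter (fun p => (p.1, v) ∈ E ∧ (p.2, v) ∈ E)
        = (((U.filter fun u => (u, v) ∈ E)) ×ˢ ((U.filter fun u => (u, v) ∈ E))).filter
            fun p => p.1 < p.2 := by
      ext p
      simp only [hPU, mem_filter, mem_product]
      tauto
    rw [ha]
    simp only [this, two_mul_card_pairs]
    rfl
  -- the target count
  have hT : (((PU ×ˢ PV).filter fun x =>
        (x.1.1, x.2.1) ∈ E ∧ (x.1.1, x.2.2) ∈ E ∧
        (x.1.2, x.2.1) ∈ E ∧ (x.1.2, x.2.2) ∈ E).card) = ∑ p ∈ PU, b p :=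
    fiber_fst PU PV _
  have hbb : ∀ p, 2 * b p = c p * (c p - 1) := by
    intro p
    have : PV.filter (fun q =>
          (p.1, q.1) ∈ E ∧ (p.1, q.2) ∈ E ∧ (p.2, q.1) ∈ E ∧ (p.2, q.2) ∈ E)
        = (((V.filter fun v => (p.1, v) ∈ E ∧ (p.2, v) ∈ E)) ×ˢ
            ((V.filter fun v => (p.1, v) ∈ E ∧ (p.2, v) ∈ E))).filter
            fun q => q.1 < q.2 := by
      ext q
      simp only [hPV, mem_filter, mem_product]
      tauto
    rw [hb]
    simp only [this, two_mul_card_pairs]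
    rfl
  -- real abbreviations
  set t : ℕ := ∑ v ∈ V, a v with ht
  set M : ℕ := PU.card with hM
  rw [hT, Nat.cast_sum]
  set TR : ℝ := ∑ p ∈ PU, (b p : ℝ) with hTR
  -- cast identities
  have hcast : ∀ k : ℕ, ((k * (k - 1) : ℕ) : ℝ) = (k : ℝ) ^ 2 - k := by
    intro k
    cases k with
    | zero => simp
    | succ j => push_cast [Nat.succ_sub_one]; ring
  have hD : (E.card : ℝ) = n * d := by
    have hnR : ((n : ℝ)) ≠ 0 := by positivity
    rw [hd]
    field_simp
  have hCS1 : ((E.card : ℝ)) ^ 2 ≤ (n : ℝ) * ∑ v ∈ V, (deg v : ℝ) ^ 2 := by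
    have hcs := sq_sum_le_card_mul_sum_sq (s := V) (f := fun v => (deg v : ℝ))
    rw [hn] at hcs
    calc ((E.card : ℝ)) ^ 2 = (∑ v ∈ V, (deg v : ℝ)) ^ 2 := by rw [hEdeg]; push_cast; ring
      _ ≤ (n : ℝ) * ∑ v ∈ V, (deg v : ℝ) ^ 2 := hcs
  have ht2 : (2 * t : ℝ) = ∑ v ∈ V, ((deg v : ℝ) ^ 2 - (deg v : ℝ)) := by
    calc (2 * t : ℝ) = ((∑ v ∈ V, 2 * a v : ℕ) : ℝ) := by
          rw [← Finset.mul_sum, ← ht]; push_cast; ring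
      _ = ((∑ v ∈ V, deg v * (deg v - 1) : ℕ) : ℝ) := by
          congr 1
          exact Finset.sum_congr rfl fun v _ => haa v
      _ = ∑ v ∈ V, ((deg v : ℝ) ^ 2 - (deg v : ℝ)) := by
          push_cast
          exact Finset.sum_congr rfl fun v _ => by rw [← hcast]; push_cast; ring
  have hnR : (0 : ℝ) < n := by exact_mod_cast hnpos
  have htlow : (t : ℝ) ≥ (n : ℝ) * d ^ 2 / 4 := by
    have hsum : ∑ v ∈ V, ((deg v : ℝ) ^ 2 - (deg v : ℝ))
        = (∑ v ∈ V, (deg v : ℝ) ^ 2) - (E.card : ℝ) := by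
      rw [Finset.sum_sub_distrib, hEdeg]
      push_cast
      ring
    have h2t : (n : ℝ) * (2 * t) ≥ (E.card : ℝ) ^ 2 - (n : ℝ) * E.card := by
      rw [ht2, hsum]
      nlinarith [hCS1]
    rw [hD] at h2t
    have key : (n : ℝ) * d ^ 2 - (n : ℝ) * d ≤ 2 * t := by
      have h' : (n : ℝ) * ((n : ℝ) * d ^ 2 - (n : ℝ) * d) ≤ (n : ℝ) * (2 * t) := by
        nlinarith [h2t]
      exact le_of_mul_le_mul_left h' hnR
    have hdd : d ≤ d ^ 2 / 2 := by nlinarith [sq_nonneg (d - 2), h2]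
    have hnd : (n : ℝ) * d ≤ (n : ℝ) * (d ^ 2 / 2) :=
      mul_le_mul_of_nonneg_left hdd hnR.le
    linarith
  have ht0 : (0 : ℝ) ≤ (t : ℝ) := Nat.cast_nonneg t
  -- M facts
  have hMm : 2 * M = m * (m - 1) := by
    rw [hM, hPU, two_mul_card_pairs, hm]
  have hMpos : 0 < M := by
    rcases Nat.eq_zero_or_pos M with h0 | h
    · exfalso
      have hPUe : PU = ∅ := Finset.card_eq_zero.mp (by rw [← hM]; exact h0)
      have ht00 : t = 0 := by rw [hcherry, hPUe, Finset.sum_empty]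
      rw [ht00] at htlow
      push_cast at htlow
      have hd2 : (0 : ℝ) < d ^ 2 := by nlinarith [h2]
      nlinarith [mul_pos hnR hd2]
    · exact h
  have hm2 : 2 ≤ m := by
    by_contra hcon
    push_neg at hcon
    interval_cases m <;> omega
  have hmR : (2 : ℝ) ≤ (m : ℝ) := by exact_mod_cast hm2
  have h2M : 2 * (M : ℝ) ≤ (m : ℝ) ^ 2 := by
    have h := congrArg (fun k : ℕ => (k : ℝ)) hMm
    simp only [Nat.cast_mul, Nat.cast_ofNat, Nat.cast_sub (by omega : 1 ≤ m),
      Nat.cast_one] at h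
    nlinarith [h, hmR]
  -- second Cauchy-Schwarz
  have hCS2 : ((t : ℝ)) ^ 2 ≤ (M : ℝ) * ∑ p ∈ PU, (c p : ℝ) ^ 2 := by
    have hcs := sq_sum_le_card_mul_sum_sq (s := PU) (f := fun p => (c p : ℝ))
    rw [← hM] at hcs
    calc ((t : ℝ)) ^ 2 = (∑ p ∈ PU, (c p : ℝ)) ^ 2 := by
          rw [hcherry, Nat.cast_sum]
      _ ≤ (M : ℝ) * ∑ p ∈ PU, (c p : ℝ) ^ 2 := hcs
  have hT2 : 2 * TR = ∑ p ∈ PU, ((c p : ℝ) ^ 2 - (c p : ℝ)) := by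
    calc 2 * TR = ((∑ p ∈ PU, 2 * b p : ℕ) : ℝ) := by
          rw [hTR, ← Finset.mul_sum]; push_cast; ring
      _ = ((∑ p ∈ PU, c p * (c p - 1) : ℕ) : ℝ) := by
          congr 1
          exact Finset.sum_congr rfl fun p _ => hbb p
      _ = ∑ p ∈ PU, ((c p : ℝ) ^ 2 - (c p : ℝ)) := by
          push_cast
          exact Finset.sum_congr rfl fun p _ => by rw [← hcast]; push_cast; ring
  have hct : ∑ p ∈ PU, (c p : ℝ) = (t : ℝ) := by
    rw [hcherry, Nat.cast_sum]
  have hTt : (M : ℝ) * (2 * TR) ≥ (t : ℝ) ^ 2 - (M : ℝ) * (t : ℝ) := by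
    have hsum : ∑ p ∈ PU, ((c p : ℝ) ^ 2 - (c p : ℝ))
        = (∑ p ∈ PU, (c p : ℝ) ^ 2) - (t : ℝ) := by
      rw [Finset.sum_sub_distrib, hct]
    rw [hT2, hsum]
    nlinarith [hCS2]
  have hTR0 : (0 : ℝ) ≤ TR := Finset.sum_nonneg fun p _ => Nat.cast_nonneg _
  have hMR0 : (0 : ℝ) < (M : ℝ) := by exact_mod_cast hMpos
  -- chain
  have htm : (t : ℝ) ≥ (m : ℝ) ^ 2 := by linarith [htlow, h1]
  have hMt : 2 * (M : ℝ) ≤ (t : ℝ) := by linarith [h2M, htm]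
  have h4MT : 4 * (M : ℝ) * TR ≥ (t : ℝ) ^ 2 := by
    nlinarith [hTt, mul_le_mul_of_nonneg_right hMt ht0]
  have hstep : 2 * (m : ℝ) ^ 2 * TR ≥ (t : ℝ) ^ 2 := by
    nlinarith [h4MT, mul_le_mul_of_nonneg_right h2M hTR0]
  have htsq : (t : ℝ) ^ 2 ≥ ((n : ℝ) * d ^ 2 / 4) ^ 2 := by
    have hpos : (0 : ℝ) ≤ (n : ℝ) * d ^ 2 / 4 := by positivity
    exact pow_le_pow_left₀ hpos htlow 2
  rw [div_le_iff₀ (by nlinarith [hmR] : (0 : ℝ) < 64 * (m : ℝ) ^ 2)]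
  nlinarith [hstep, htsq, hTR0, sq_nonneg ((m : ℝ))]
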